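/- arXiv:2308.03918 — 3 statements merged into one kernel-verified Lean document; each statement's English description precedes it below -/
import Mathlib

section
/- Let A ∈ ℝ^{n×n} be Hurwitz (all eigenvalues have negative real part), and let U ∈ ℝ^{n×n} be such that V := ∫₀^∞ e^{tA} U e^{tAᵀ} dt is invertible. Then for every λ ∈ ℝ, writing G(iλ) := (iλ I_n - A)^{-1} and G(iλ)* := (-iλ I_n - Aᵀ)^{-1}, one has G(iλ) U G(iλ)* = V G(iλ)* V^{-1} U V^{-1} G(iλ) V. -/
open Matrix MeasureTheory

section Aux
open NormedSpace Finset
open scoped Nat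

section LinftyWorld
variable {n : ℕ}
attribute [local instance] Matrix.linftyOpNormedRing Matrix.linftyOpNormedAlgebra

lemma gen_decay (B : Matrix (Fin n) (Fin n) ℂ) (μ : ℂ) (hμ : μ.re < 0) (K : ℕ)
    (v : Fin n → ℂ) (hv : ((B - μ • 1) ^ K) *ᵥ v = 0) :
    ∃ C ε : ℝ, 0 < ε ∧ ∀ t : ℝ, 0 ≤ t → ‖exp (t • B) *ᵥ v‖ ≤ C * Real.exp (-ε * t) := by
  set N := B - μ • (1 : Matrix (Fin n) (Fin n) ℂ) with hN
  set ε : ℝ := -μ.re / 2 with hε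
  have hε0 : 0 < ε := by simp [hε]; linarith
  -- the linear map M ↦ M *ᵥ v
  let L : Matrix (Fin n) (Fin n) ℂ →ₗ[ℂ] (Fin n → ℂ) :=
    { toFun := fun M => M *ᵥ v
      map_add' := fun M M' => Matrix.add_mulVec M M' v
      map_smul' := fun c M => Matrix.smul_mulVec c M v }
  let Lc : Matrix (Fin n) (Fin n) ℂ →L[ℂ] (Fin n → ℂ) := LinearMap.toContinuousLinearMap L
  have key : ∀ t : ℝ, exp (t • B) *ᵥ v
      = Complex.exp (t * μ) • ∑ k ∈ Finset.range K, (((t : ℂ) ^ k / (k ! : ℂ)) • (N ^ k *ᵥ v)) := by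
    intro t
    have hsplit : (t : ℝ) • B = ((t : ℂ) * μ) • (1 : Matrix (Fin n) (Fin n) ℂ) + (t : ℂ) • N := by
      rw [hN, smul_sub, ← algebraMap_smul ℂ t B]
      rw [smul_smul]
      ring_nf
      abel
    have hcomm : Commute (((t : ℂ) * μ) • (1 : Matrix (Fin n) (Fin n) ℂ)) ((t : ℂ) • N) :=
      ((Commute.one_left _).smul_left _).smul_right _
    have h1 : exp (((t : ℂ) * μ) • (1 : Matrix (Fin n) (Fin n) ℂ))
        = Complex.exp (t * μ) • (1 : Matrix (Fin n) (Fin n) ℂ) := by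
      have e := algebraMap_exp_comm (𝔸 := Matrix (Fin n) (Fin n) ℂ) ((t : ℂ) * μ)
      simp only [Algebra.algebraMap_eq_smul_one] at e
      rw [← Complex.exp_eq_exp_ℂ] at e
      exact e.symm
    have h2 : exp ((t : ℂ) • N) *ᵥ v
        = ∑ k ∈ Finset.range K, (((t : ℂ) ^ k / (k ! : ℂ)) • (N ^ k *ᵥ v)) := by
      have hvan : ∀ k, K ≤ k → N ^ k *ᵥ v = 0 := by
        intro k hk
        have : N ^ k = N ^ (k - K) * N ^ K := by rw [← pow_add]; congr 1; omega
        rw [this, ← Matrix.mulVec_mulVec, hv, Matrix.mulVec_zero]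
      have : exp ((t : ℂ) • N) *ᵥ v = Lc (exp ((t : ℂ) • N)) := rfl
      rw [this, exp_eq_tsum ℂ]
      rw [Lc.map_tsum (expSeries_summable' ((t:ℂ) • N))]
      have hterm : ∀ k : ℕ, Lc ((k !⁻¹ : ℂ) • ((t : ℂ) • N) ^ k)
          = ((t : ℂ) ^ k / (k ! : ℂ)) • (N ^ k *ᵥ v) := by
        intro k
        have : ((t : ℂ) • N) ^ k = (t : ℂ) ^ k • N ^ k := smul_pow _ _ _
        rw [this]
        show ((k !⁻¹ : ℂ) • ((t:ℂ) ^ k • N ^ k)) *ᵥ v = _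
        rw [smul_smul, Matrix.smul_mulVec]
        congr 1
        field_simp
      simp_rw [hterm]
      refine tsum_eq_sum ?_
      intro k hk
      rw [hvan k (by simpa using hk), smul_zero]
    calc exp (t • B) *ᵥ v
        = (exp (((t : ℂ) * μ) • (1 : Matrix (Fin n) (Fin n) ℂ)) * exp ((t : ℂ) • N)) *ᵥ v := by
          rw [← Matrix.exp_add_of_commute _ _ hcomm, ← hsplit]
      _ = Complex.exp (t * μ) • (exp ((t : ℂ) • N) *ᵥ v) := by
          rw [h1, smul_mul_assoc, one_mul, Matrix.smul_mulVec]
      _ = _ := by rw [h2]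
  refine ⟨∑ k ∈ Finset.range K, ‖N ^ k *ᵥ v‖ / ε ^ k, ε, hε0, fun t ht => ?_⟩
  rw [key t, norm_smul]
  have habs : ‖Complex.exp (t * μ)‖ = Real.exp (t * μ.re) := by
    rw [Complex.norm_exp]
    congr 1
    simp [Complex.mul_re]
  rw [habs]
  calc Real.exp (t * μ.re) * ‖∑ k ∈ Finset.range K, (((t : ℂ) ^ k / (k ! : ℂ)) • (N ^ k *ᵥ v))‖
      ≤ Real.exp (t * μ.re) * ∑ k ∈ Finset.range K, (t ^ k / (k ! : ℝ)) * ‖N ^ k *ᵥ v‖ := by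
        refine mul_le_mul_of_nonneg_left ((norm_sum_le _ _).trans ?_) (Real.exp_pos _).le
        refine Finset.sum_le_sum fun k _ => ?_
        rw [norm_smul]
        refine mul_le_mul_of_nonneg_right (le_of_eq ?_) (norm_nonneg _)
        rw [norm_div, Complex.norm_natCast, ← Complex.ofReal_pow,
          Complex.norm_of_nonneg (pow_nonneg ht k)]
    _ ≤ Real.exp (t * μ.re) * ∑ k ∈ Finset.range K,
          (Real.exp (ε * t) / ε ^ k) * ‖N ^ k *ᵥ v‖ := by
        refine mul_le_mul_of_nonneg_left (Finset.sum_le_sum fun k _ => ?_) (Real.exp_pos _).le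
        refine mul_le_mul_of_nonneg_right ?_ (norm_nonneg _)
        have h0 := Real.pow_div_factorial_le_exp (ε * t) (mul_nonneg hε0.le ht) k
        rw [div_le_div_iff₀ (by positivity) (by positivity)]
        calc t ^ k * ε ^ k = (ε * t) ^ k := by ring
          _ ≤ Real.exp (ε * t) * (k ! : ℝ) := (div_le_iff₀ (by positivity)).mp h0
    _ = (∑ k ∈ Finset.range K, ‖N ^ k *ᵥ v‖ / ε ^ k) * Real.exp (-ε * t) := by
        rw [Finset.mul_sum, Finset.sum_mul]
        refine Finset.sum_congr rfl fun k _ => ?_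
        have hee : Real.exp (t * μ.re) * Real.exp (ε * t) = Real.exp (-ε * t) := by
          rw [← Real.exp_add]; congr 1; rw [hε]; ring
        calc Real.exp (t * μ.re) * (Real.exp (ε * t) / ε ^ k * ‖N ^ k *ᵥ v‖)
            = (Real.exp (t * μ.re) * Real.exp (ε * t)) * (‖N ^ k *ᵥ v‖ / ε ^ k) := by ring
          _ = ‖N ^ k *ᵥ v‖ / ε ^ k * Real.exp (-ε * t) := by rw [hee]; ring
    _ ≤ _ := le_refl _


lemma vec_decay (B : Matrix (Fin n) (Fin n) ℂ)
    (hB : ∀ μ ∈ spectrum ℂ B, μ.re < 0) (v : Fin n → ℂ) :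
    ∃ C ε : ℝ, 0 < ε ∧ ∀ t : ℝ, 0 ≤ t → ‖exp (t • B) *ᵥ v‖ ≤ C * Real.exp (-ε * t) := by
  set f : Module.End ℂ (Fin n → ℂ) := Matrix.toLinAlgEquiv' B with hf
  have hv : v ∈ ⨆ μ : ℂ, f.maxGenEigenspace μ := by
    rw [Module.End.iSup_maxGenEigenspace_eq_top f]; trivial
  refine Submodule.iSup_induction _ (motive := fun w => ∃ C ε : ℝ, 0 < ε ∧ ∀ t : ℝ, 0 ≤ t →
    ‖exp (t • B) *ᵥ w‖ ≤ C * Real.exp (-ε * t)) hv ?_ ?_ ?_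
  · intro μ x hx
    rcases (Module.End.mem_maxGenEigenspace f μ x).mp hx with ⟨K, hK⟩
    by_cases hx0 : x = 0
    · exact ⟨0, 1, one_pos, fun t _ => by simp [hx0, Matrix.mulVec_zero]⟩
    have hKx : ((B - μ • 1) ^ K) *ᵥ x = 0 := by
      have h1 : Matrix.toLinAlgEquiv' ((B - μ • (1 : Matrix (Fin n) (Fin n) ℂ)) ^ K) x = 0 := by
        rw [map_pow, map_sub, _root_.map_smul, _root_.map_one]; exact hK
      rwa [Matrix.toLinAlgEquiv'_apply] at h1
    have hspec : μ ∈ spectrum ℂ B := by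
      rw [spectrum.mem_iff]
      intro hU
      rw [Algebra.algebraMap_eq_smul_one] at hU
      have hU2 : IsUnit (B - μ • (1 : Matrix (Fin n) (Fin n) ℂ)) := by
        rw [← neg_sub]; exact hU.neg
      obtain ⟨u, hu⟩ := hU2.pow K
      apply hx0
      have h2 : ((↑u⁻¹ : Matrix (Fin n) (Fin n) ℂ) * (↑u : Matrix (Fin n) (Fin n) ℂ)) *ᵥ x = x := by
        rw [u.inv_mul, Matrix.one_mulVec]
      rw [← h2, ← Matrix.mulVec_mulVec, hu, hKx, Matrix.mulVec_zero]
    exact gen_decay B μ (hB μ hspec) K x hKx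
  · exact ⟨0, 1, one_pos, fun t _ => by simp [Matrix.mulVec_zero]⟩
  · rintro x y ⟨Cx, εx, hεx, hx⟩ ⟨Cy, εy, hεy, hy⟩
    refine ⟨max Cx 0 + max Cy 0, min εx εy, lt_min hεx hεy, fun t ht => ?_⟩
    have key : ∀ Cz εz : ℝ, 0 < εz → min εx εy ≤ εz → ∀ w : Fin n → ℂ,
        (∀ t : ℝ, 0 ≤ t → ‖exp (t • B) *ᵥ w‖ ≤ Cz * Real.exp (-εz * t)) →
        ‖exp (t • B) *ᵥ w‖ ≤ max Cz 0 * Real.exp (-(min εx εy) * t) := by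
      intro Cz εz hεz hmin w hw
      refine (hw t ht).trans (mul_le_mul (le_max_left _ _) ?_ (Real.exp_pos _).le (le_max_right _ _))
      exact Real.exp_le_exp.mpr (by nlinarith)
    rw [Matrix.mulVec_add]
    refine (norm_add_le _ _).trans ?_
    rw [add_mul]
    exact add_le_add (key Cx εx hεx (min_le_left _ _) x hx) (key Cy εy hεy (min_le_right _ _) y hy)

lemma entry_decay (B : Matrix (Fin n) (Fin n) ℂ)
    (hB : ∀ μ ∈ spectrum ℂ B, μ.re < 0) :
    ∃ C ε : ℝ, 0 < ε ∧ 0 ≤ C ∧ ∀ t : ℝ, 0 ≤ t → ∀ i j, ‖(exp (t • B)) i j‖ ≤ C * Real.exp (-ε * t) := by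
  choose Cs εs hεs hbound using fun j => vec_decay B hB (Pi.single j 1)
  rcases Nat.eq_zero_or_pos n with hn | hn
  · exact ⟨0, 1, one_pos, le_refl _, fun t ht i => by subst hn; exact isEmptyElim i⟩
  have hne : (Finset.univ : Finset (Fin n)).Nonempty := by
    simpa [Finset.univ_nonempty_iff] using Fin.pos_iff_nonempty.mp hn
  refine ⟨∑ j, max (Cs j) 0, Finset.univ.inf' hne εs, ?_, ?_, ?_⟩
  · rw [Finset.lt_inf'_iff]; exact fun j _ => hεs j
  · exact Finset.sum_nonneg fun j _ => le_max_right _ _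
  intro t ht i j
  have h1 : (exp (t • B)) i j = (exp (t • B) *ᵥ Pi.single j 1) i := by
    simp [Matrix.mulVec_single]
  rw [h1]
  refine (norm_le_pi_norm _ i).trans ?_
  refine (hbound j t ht).trans ?_
  have h2 : Cs j * Real.exp (-εs j * t) ≤ max (Cs j) 0 * Real.exp (-(Finset.univ.inf' hne εs) * t) := by
    refine mul_le_mul (le_max_left _ _) (Real.exp_le_exp.mpr ?_) (Real.exp_pos _).le (le_max_right _ _)
    have := Finset.inf'_le εs (Finset.mem_univ j)
    nlinarith
  refine h2.trans (mul_le_mul_of_nonneg_right ?_ (Real.exp_pos _).le)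
  exact Finset.single_le_sum (f := fun j => max (Cs j) 0) (fun k _ => le_max_right _ _) (Finset.mem_univ j)

lemma exp_map_complex (A : Matrix (Fin n) (Fin n) ℝ) :
    (exp A).map (algebraMap ℝ ℂ) = exp (A.map (algebraMap ℝ ℂ)) := by
  have hcont : Continuous ((algebraMap ℝ ℂ).mapMatrix :
      Matrix (Fin n) (Fin n) ℝ →+* Matrix (Fin n) (Fin n) ℂ) := by
    apply continuous_matrix
    intro i j
    exact Complex.continuous_ofReal.comp ((continuous_id.matrix_elem i j))
  have h := map_exp ((algebraMap ℝ ℂ).mapMatrix :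
      Matrix (Fin n) (Fin n) ℝ →+* Matrix (Fin n) (Fin n) ℂ) hcont A
  exact h

lemma real_entry_decay (A : Matrix (Fin n) (Fin n) ℝ)
    (hA : ∀ μ ∈ spectrum ℂ (A.map (algebraMap ℝ ℂ)), μ.re < 0) :
    ∃ C ε : ℝ, 0 < ε ∧ 0 ≤ C ∧ ∀ t : ℝ, 0 ≤ t → ∀ i j,
      |(exp (t • A)) i j| ≤ C * Real.exp (-ε * t) := by
  obtain ⟨C, ε, hε, hC, hb⟩ := entry_decay (A.map (algebraMap ℝ ℂ)) hA
  refine ⟨C, ε, hε, hC, fun t ht i j => ?_⟩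
  have h1 : (t • A).map (algebraMap ℝ ℂ) = t • (A.map (algebraMap ℝ ℂ)) := by
    ext i j
    simp [Matrix.map_apply, Complex.real_smul]
  have h2 : ((exp (t • A)).map (algebraMap ℝ ℂ)) i j = (exp (t • A.map (algebraMap ℝ ℂ))) i j := by
    rw [exp_map_complex, h1]
  rw [Matrix.map_apply] at h2
  have h3 : |(exp (t • A)) i j| = ‖(algebraMap ℝ ℂ) ((exp (t • A)) i j)‖ := by
    simp [Complex.norm_real]
  rw [h3, h2]
  exact hb t ht i j

lemma spectrum_transpose (M : Matrix (Fin n) (Fin n) ℂ) : spectrum ℂ Mᵀ = spectrum ℂ M := by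
  ext μ
  rw [spectrum.mem_iff, spectrum.mem_iff, not_iff_not]
  have h : (algebraMap ℂ (Matrix (Fin n) (Fin n) ℂ) μ) - Mᵀ
      = ((algebraMap ℂ (Matrix (Fin n) (Fin n) ℂ) μ) - M)ᵀ := by
    rw [Matrix.transpose_sub, Algebra.algebraMap_eq_smul_one, Matrix.transpose_smul,
      Matrix.transpose_one, ← Algebra.algebraMap_eq_smul_one]
  rw [h, Matrix.isUnit_iff_isUnit_det, Matrix.det_transpose, ← Matrix.isUnit_iff_isUnit_det]

lemma g_cont (A U : Matrix (Fin n) (Fin n) ℝ) :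
    Continuous fun t : ℝ => exp (t • A) * U * exp (t • Aᵀ) := by
  have h : ∀ B : Matrix (Fin n) (Fin n) ℝ, Continuous fun t : ℝ => exp (t • B) := fun B =>
    exp_continuous.comp (continuous_id.smul continuous_const)
  exact ((h A).mul continuous_const).mul (h Aᵀ)

lemma g_slope (A U : Matrix (Fin n) (Fin n) ℝ) (t : ℝ) :
    Filter.Tendsto (slope (fun s : ℝ => exp (s • A) * U * exp (s • Aᵀ)) t) (nhdsWithin t {t}ᶜ)
      (nhds (A * (exp (t • A) * U * exp (t • Aᵀ)) + (exp (t • A) * U * exp (t • Aᵀ)) * Aᵀ)) := by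
  refine hasDerivAt_iff_tendsto_slope.mp ?_
  have h1 : HasDerivAt (fun s : ℝ => exp (s • A) * U)
      (A * exp (t • A) * U) t := (hasDerivAt_exp_smul_const' A t).mul_const U
  have h2 : HasDerivAt (fun s : ℝ => exp (s • Aᵀ)) (exp (t • Aᵀ) * Aᵀ) t :=
    hasDerivAt_exp_smul_const Aᵀ t
  have h := h1.mul h2
  exact h.congr_deriv (by simp only [mul_assoc])

lemma g_entry_decay (A U : Matrix (Fin n) (Fin n) ℝ)
    (hA : ∀ μ ∈ spectrum ℂ (A.map (algebraMap ℝ ℂ)), μ.re < 0) :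
    ∃ C ε : ℝ, 0 < ε ∧ 0 ≤ C ∧ ∀ t : ℝ, 0 ≤ t → ∀ i j,
      |(exp (t • A) * U * exp (t • Aᵀ)) i j| ≤ C * Real.exp (-ε * t) := by
  have hAT : ∀ μ ∈ spectrum ℂ (Aᵀ.map (algebraMap ℝ ℂ)), μ.re < 0 := by
    intro μ hμ
    rw [Matrix.transpose_map, spectrum_transpose] at hμ
    exact hA μ hμ
  obtain ⟨C1, ε1, hε1, hC1, h1⟩ := real_entry_decay A hA
  obtain ⟨C2, ε2, hε2, hC2, h2⟩ := real_entry_decay Aᵀ hAT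
  refine ⟨(∑ l : Fin n, ∑ k : Fin n, |U k l|) * (C1 * C2), ε1 + ε2, by linarith, by positivity,
    fun t ht i j => ?_⟩
  set X := exp (t • A) with hX
  set Y := exp (t • Aᵀ) with hY
  have hentry : (X * U * Y) i j = ∑ l, ∑ k, X i k * U k l * Y l j := by
    simp_rw [Matrix.mul_apply, Finset.sum_mul]
  rw [hentry]
  refine (Finset.abs_sum_le_sum_abs _ _).trans ?_
  refine (Finset.sum_le_sum fun l _ => Finset.abs_sum_le_sum_abs _ _).trans ?_
  have hterm : ∀ l k, |X i k * U k l * Y l j|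
      ≤ |U k l| * (C1 * C2 * Real.exp (-(ε1 + ε2) * t)) := by
    intro l k
    rw [abs_mul, abs_mul]
    have ha := h1 t ht i k
    have hb := h2 t ht l j
    have hee : Real.exp (-ε1 * t) * Real.exp (-ε2 * t) = Real.exp (-(ε1 + ε2) * t) := by
      rw [← Real.exp_add]; ring_nf
    calc |X i k| * |U k l| * |Y l j| = |U k l| * (|X i k| * |Y l j|) := by ring
      _ ≤ |U k l| * ((C1 * Real.exp (-ε1 * t)) * (C2 * Real.exp (-ε2 * t))) :=
          mul_le_mul_of_nonneg_left (mul_le_mul ha hb (abs_nonneg _) (by positivity)) (abs_nonneg _)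
      _ = |U k l| * (C1 * C2 * Real.exp (-(ε1 + ε2) * t)) := by rw [← hee]; ring
  refine (Finset.sum_le_sum fun l _ => Finset.sum_le_sum fun k _ => hterm l k).trans ?_
  refine le_of_eq ?_
  simp_rw [← Finset.sum_mul]
  ring

end LinftyWorld

section SupWorld
variable {n : ℕ}
attribute [local instance] Matrix.normedAddCommGroup Matrix.normedSpace

def supENorm : ContinuousENorm (Matrix (Fin n) (Fin n) ℝ) := SeminormedAddGroup.toContinuousENorm
theorem supPM : TopologicalSpace.PseudoMetrizableSpace (Matrix (Fin n) (Fin n) ℝ) :=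
  inferInstanceAs (TopologicalSpace.PseudoMetrizableSpace (Fin n → Fin n → ℝ))
attribute [local instance] supENorm supPM

lemma sup_norm_mul_le (X Y : Matrix (Fin n) (Fin n) ℝ) : ‖X * Y‖ ≤ n * ‖X‖ * ‖Y‖ := by
  refine (Matrix.norm_le_iff (by positivity)).mpr fun i j => ?_
  rw [Matrix.mul_apply]
  refine (norm_sum_le _ _).trans ?_
  have h : ∀ k ∈ Finset.univ, ‖X i k * Y k j‖ ≤ ‖X‖ * ‖Y‖ := fun k _ => by
    rw [norm_mul]
    exact mul_le_mul (Matrix.norm_entry_le_entrywise_sup_norm X)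
      (Matrix.norm_entry_le_entrywise_sup_norm Y) (norm_nonneg _) (norm_nonneg _)
  refine (Finset.sum_le_sum h).trans ?_
  rw [Finset.sum_const, Finset.card_univ, Fintype.card_fin, nsmul_eq_mul, mul_assoc]

lemma lyapunov (A U V : Matrix (Fin n) (Fin n) ℝ)
    (hA : ∀ μ ∈ spectrum ℂ (A.map (algebraMap ℝ ℂ)), μ.re < 0)
    (hV : V = ∫ t in Set.Ioi (0 : ℝ), exp (t • A) * U * exp (t • Aᵀ)) :
    A * V + V * Aᵀ = -U := by
  set g : ℝ → Matrix (Fin n) (Fin n) ℝ := fun t => exp (t • A) * U * exp (t • Aᵀ) with hg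
  obtain ⟨C, ε, hε, hC, hb⟩ := g_entry_decay A U hA
  have hgn : ∀ t : ℝ, 0 ≤ t → ‖g t‖ ≤ C * Real.exp (-ε * t) := fun t ht =>
    (Matrix.norm_le_iff (by positivity)).mpr fun i j => by
      simpa [Real.norm_eq_abs] using hb t ht i j
  have hgc : Continuous g := g_cont A U
  have hdom : IntegrableOn (fun t => C * Real.exp (-ε * t)) (Set.Ioi 0) :=
    (exp_neg_integrableOn_Ioi 0 hε).const_mul C
  have hInt : IntegrableOn g (Set.Ioi 0) := by
    refine Integrable.mono' hdom hgc.aestronglyMeasurable ?_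
    exact (ae_restrict_iff' measurableSet_Ioi).mpr
      (Filter.Eventually.of_forall fun t ht => hgn t (le_of_lt ht))
  have hderiv : ∀ t ∈ Set.Ioi (0 : ℝ), HasDerivAt g (A * g t + g t * Aᵀ) t := fun t _ => by
    exact hasDerivAt_iff_tendsto_slope.mpr (g_slope A U t)
  have hg'c : Continuous fun t => A * g t + g t * Aᵀ :=
    (continuous_const.matrix_mul hgc).add (hgc.matrix_mul continuous_const)
  have hg'int : IntegrableOn (fun t => A * g t + g t * Aᵀ) (Set.Ioi 0) := by
    have hdom2 : IntegrableOn (fun t => (n * ‖A‖ + n * ‖Aᵀ‖) * (C * Real.exp (-ε * t)))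
        (Set.Ioi 0) := hdom.const_mul _
    refine Integrable.mono' hdom2 hg'c.aestronglyMeasurable ?_
    refine (ae_restrict_iff' measurableSet_Ioi).mpr (Filter.Eventually.of_forall fun t ht => ?_)
    refine (norm_add_le _ _).trans ?_
    have h1 : ‖A * g t‖ ≤ n * ‖A‖ * ‖g t‖ := sup_norm_mul_le A (g t)
    have h2 : ‖g t * Aᵀ‖ ≤ n * ‖g t‖ * ‖Aᵀ‖ := sup_norm_mul_le (g t) Aᵀ
    have h3 := hgn t ht.le
    have hgnn : (0 : ℝ) ≤ ‖g t‖ := norm_nonneg _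
    calc ‖A * g t‖ + ‖g t * Aᵀ‖ ≤ n * ‖A‖ * ‖g t‖ + n * ‖g t‖ * ‖Aᵀ‖ := add_le_add h1 h2
      _ = (n * ‖A‖ + n * ‖Aᵀ‖) * ‖g t‖ := by ring
      _ ≤ (n * ‖A‖ + n * ‖Aᵀ‖) * (C * Real.exp (-ε * t)) := by
          refine mul_le_mul_of_nonneg_left h3 (by positivity)
  have htend : Filter.Tendsto g Filter.atTop (nhds 0) := by
    refine squeeze_zero_norm' ((Filter.eventually_ge_atTop 0).mono fun t ht => hgn t ht) ?_
    have h1 : Filter.Tendsto (fun t : ℝ => ε * t) Filter.atTop Filter.atTop :=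
      Filter.Tendsto.const_mul_atTop hε Filter.tendsto_id
    have h2 : Filter.Tendsto (fun t : ℝ => Real.exp (-(ε * t))) Filter.atTop (nhds 0) :=
      Real.tendsto_exp_neg_atTop_nhds_zero.comp h1
    have h3 := h2.const_mul C
    rw [mul_zero] at h3
    simpa [neg_mul] using h3
  have hFTC := integral_Ioi_of_hasDerivAt_of_tendsto hgc.continuousWithinAt hderiv hg'int htend
  have hg0 : g 0 = U := by simp [hg]
  rw [hg0] at hFTC
  let L1 : Matrix (Fin n) (Fin n) ℝ →L[ℝ] Matrix (Fin n) (Fin n) ℝ :=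
    LinearMap.toContinuousLinearMap (LinearMap.mulLeft ℝ A)
  let L2 : Matrix (Fin n) (Fin n) ℝ →L[ℝ] Matrix (Fin n) (Fin n) ℝ :=
    LinearMap.toContinuousLinearMap (LinearMap.mulRight ℝ Aᵀ)
  have hsplit : (∫ t in Set.Ioi (0 : ℝ), (A * g t + g t * Aᵀ)) = A * V + V * Aᵀ := by
    have e1 : (fun t => A * g t) = fun t => L1 (g t) := rfl
    have e2 : (fun t => g t * Aᵀ) = fun t => L2 (g t) := rfl
    calc (∫ t in Set.Ioi (0 : ℝ), (A * g t + g t * Aᵀ))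
        = (∫ t in Set.Ioi (0 : ℝ), A * g t) + ∫ t in Set.Ioi (0 : ℝ), g t * Aᵀ := by
          refine integral_add ?_ ?_
          · rw [e1]; exact L1.integrable_comp hInt
          · rw [e2]; exact L2.integrable_comp hInt
      _ = L1 (∫ t in Set.Ioi (0 : ℝ), g t) + L2 (∫ t in Set.Ioi (0 : ℝ), g t) := by
          rw [e1, e2]
          exact congrArg₂ (· + ·) (ContinuousLinearMap.integral_comp_comm L1 hInt)
            (ContinuousLinearMap.integral_comp_comm L2 hInt)
      _ = A * V + V * Aᵀ := by rw [hV]; rfl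
  rw [hsplit] at hFTC
  rw [hFTC]
  abel

end SupWorld

end Aux

attribute [local instance] Matrix.normedAddCommGroup Matrix.normedSpace

/-- for Hurwitz `A ∈ ℝ^{n×n}` and `U ∈ ℝ^{n×n}` such that
`V := ∫₀^∞ e^{tA} U e^{tAᵀ} dt` is invertible, the resolvents
`G(iλ) = (iλI - A)⁻¹`, `G(iλ)* = (-iλI - Aᵀ)⁻¹` satisfy
`G(iλ) U G(iλ)* = V G(iλ)* V⁻¹ U V⁻¹ G(iλ) V` for all `λ ∈ ℝ`. -/
theorem stmt10 (n : ℕ) (A U : Matrix (Fin n) (Fin n) ℝ)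
    (hA : ∀ μ ∈ spectrum ℂ (A.map (algebraMap ℝ ℂ)), μ.re < 0)
    (V : Matrix (Fin n) (Fin n) ℝ)
    (hV : V = ∫ t in Set.Ioi (0 : ℝ),
      NormedSpace.exp (t • A) * U * NormedSpace.exp (t • Aᵀ))
    (hVinv : IsUnit V.det) :
    ∀ l : ℝ,
      let Ac := A.map (algebraMap ℝ ℂ)
      let Uc := U.map (algebraMap ℝ ℂ)
      let Vc := V.map (algebraMap ℝ ℂ)
      let G := ((Complex.I * l) • (1 : Matrix (Fin n) (Fin n) ℂ) - Ac)⁻¹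
      let Gs := ((-(Complex.I * l)) • (1 : Matrix (Fin n) (Fin n) ℂ) - Acᵀ)⁻¹
      G * Uc * Gs = Vc * Gs * Vc⁻¹ * Uc * Vc⁻¹ * G * Vc := by
  intro l Ac Uc Vc G Gs
  have hlyap : A * V + V * Aᵀ = -U := lyapunov A U V hA hV
  set X : Matrix (Fin n) (Fin n) ℂ := (Complex.I * l) • (1 : Matrix (Fin n) (Fin n) ℂ) - Ac with hX
  set Y : Matrix (Fin n) (Fin n) ℂ :=
    (-(Complex.I * l)) • (1 : Matrix (Fin n) (Fin n) ℂ) - Acᵀ with hY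
  have hG : G = X⁻¹ := rfl
  have hGs : Gs = Y⁻¹ := rfl
  -- complexified Lyapunov
  have hlyapC : Ac * Vc + Vc * Acᵀ = -Uc := by
    have h1 := congrArg ((algebraMap ℝ ℂ).mapMatrix :
      Matrix (Fin n) (Fin n) ℝ →+* Matrix (Fin n) (Fin n) ℂ) hlyap
    simp only [map_add, map_neg, RingHom.mapMatrix_apply, Matrix.map_mul,
      Matrix.transpose_map] at h1
    exact h1
  -- determinants
  have hVc : IsUnit Vc.det := by
    have h := (RingHom.map_det (algebraMap ℝ ℂ) V).symm
    have h2 : Vc.det = algebraMap ℝ ℂ V.det := by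
      rw [← h]; rfl
    rw [h2]
    exact hVinv.map (algebraMap ℝ ℂ)
  have hXd : IsUnit X.det := by
    have hnot : (Complex.I * l) ∉ spectrum ℂ Ac := by
      intro h
      have := hA _ h
      simp [Complex.mul_re] at this
    have h := spectrum.notMem_iff.mp hnot
    rw [Algebra.algebraMap_eq_smul_one] at h
    exact (Matrix.isUnit_iff_isUnit_det _).mp h
  have hYd : IsUnit Y.det := by
    have hnot : (-(Complex.I * l)) ∉ spectrum ℂ Ac := by
      intro h
      have := hA _ h
      simp [Complex.mul_re] at this
    have h := spectrum.notMem_iff.mp hnot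
    rw [Algebra.algebraMap_eq_smul_one] at h
    have h2 : Y = ((-(Complex.I * l)) • (1 : Matrix (Fin n) (Fin n) ℂ) - Ac)ᵀ := by
      rw [Matrix.transpose_sub, Matrix.transpose_smul, Matrix.transpose_one]
    have h3 : IsUnit Y.det := by
      rw [h2, Matrix.det_transpose]
      exact (Matrix.isUnit_iff_isUnit_det _).mp h
    exact h3
  -- U in terms of X, Y
  have hUc : Uc = X * Vc + Vc * Y := by
    have : X * Vc + Vc * Y = -(Ac * Vc + Vc * Acᵀ) := by
      have e1 : X * Vc = (Complex.I * l) • Vc - Ac * Vc := by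
        rw [hX, Matrix.sub_mul, Matrix.smul_mul, one_mul]
      have e2 : Vc * Y = -((Complex.I * l) • Vc) - Vc * Acᵀ := by
        rw [hY, Matrix.mul_sub, Matrix.mul_smul, mul_one, neg_smul]
      rw [e1, e2]
      abel
    rw [this, hlyapC, neg_neg]
  rw [hG, hGs, hUc]
  simp only [Matrix.mul_add, Matrix.add_mul, Matrix.mul_assoc,
    Matrix.nonsing_inv_mul_cancel_left (h := hXd), Matrix.nonsing_inv_mul_cancel_left (h := hVc),
    Matrix.nonsing_inv_mul_cancel_left (h := hYd),
    Matrix.mul_nonsing_inv_cancel_left (h := hXd), Matrix.mul_nonsing_inv_cancel_left (h := hVc),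
    Matrix.mul_nonsing_inv_cancel_left (h := hYd),
    Matrix.mul_nonsing_inv _ hYd, Matrix.mul_nonsing_inv _ hVc, Matrix.mul_nonsing_inv _ hXd,
    Matrix.nonsing_inv_mul _ hYd, Matrix.nonsing_inv_mul _ hVc, Matrix.nonsing_inv_mul _ hXd,
    Matrix.mul_one, Matrix.one_mul]
end

section
/- Let Θ ∈ ℝ^{n×n} and J ∈ ℝ^{m×m} be antisymmetric, R ∈ ℝ^{n×n} symmetric, and M ∈ ℝ^{m×n} arbitrary. Define A := 2Θ(R + MᵀJM) and B := 2ΘMᵀ. Then the physical realizability identity A Θ + Θ Aᵀ + B J Bᵀ = 0 holds. -/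
open Matrix

/-- physical realizability identity. For antisymmetric `Θ`, `J`,
symmetric `R` and arbitrary `M`, the matrices `A = 2Θ(R + MᵀJM)` and `B = 2ΘMᵀ`
satisfy `AΘ + ΘAᵀ + BJBᵀ = 0`. -/
theorem stmt15 (n m : ℕ) (Θ : Matrix (Fin n) (Fin n) ℝ) (J : Matrix (Fin m) (Fin m) ℝ)
    (R : Matrix (Fin n) (Fin n) ℝ) (M : Matrix (Fin m) (Fin n) ℝ)
    (hΘ : Θᵀ = -Θ) (hJ : Jᵀ = -J) (hR : Rᵀ = R) :
    let A := (2 : ℝ) • (Θ * (R + Mᵀ * J * M))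
    let B := (2 : ℝ) • (Θ * Mᵀ)
    A * Θ + Θ * Aᵀ + B * J * Bᵀ = 0 := by
  intro A B
  simp only [A, B, transpose_smul, transpose_mul, transpose_add, hΘ, hJ, hR, transpose_transpose]
  simp only [Matrix.neg_mul, Matrix.mul_neg, smul_neg, Matrix.smul_mul, Matrix.mul_smul,
    smul_smul, smul_add, Matrix.mul_add, Matrix.add_mul, Matrix.mul_assoc]
  module
end

section
/- Define sequences of n×n matrices by β₀ = I_n, and for k ≥ 0: γ_k antisymmetric-or-symmetric data given recursively by γ_k = L(α_k Π^{δ_{k1}} γ_{k-1}), α_{k+1} = γ_k β_k, β_{k+1} = γ_k^{-1} α_k Π^{δ_{k1}} γ_{k-1} γ_k^{-1}, with initial α₁ = γ₀ = Θ (antisymmetric, invertible), β₁ = Θ^{-1} 𝝸 Θ^{-1} where 𝝸 is antisymmetric, Π is symmetric positive semidefinite, and L(U) := ∫₀^∞ e^{tA} U e^{tAᵀ} dt for a Hurwitz A. Assuming each γ_k is invertible, the matrices satisfy β_kᵀ = (-1)^k β_k and γ_kᵀ = -(-1)^k γ_k for all k ≥ 0. -/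
open Matrix MeasureTheory

attribute [local instance] Matrix.normedAddCommGroup Matrix.normedSpace

noncomputable def transposeLI (n : ℕ) :
    Matrix (Fin n) (Fin n) ℝ →ₗᵢ[ℝ] Matrix (Fin n) (Fin n) ℝ :=
  { toLinearMap := (Matrix.transposeLinearEquiv (Fin n) (Fin n) ℝ ℝ).toLinearMap
    norm_map' := fun M => Matrix.norm_transpose M }

lemma integral_transpose (n : ℕ) (f : ℝ → Matrix (Fin n) (Fin n) ℝ) :
    (∫ t in Set.Ioi (0 : ℝ), f t)ᵀ = ∫ t in Set.Ioi (0 : ℝ), (f t)ᵀ :=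
  ((transposeLI n).integral_comp_comm f).symm

lemma matrix_inv_neg {n : ℕ} (A : Matrix (Fin n) (Fin n) ℝ) (h : IsUnit A.det) :
    (-A)⁻¹ = -A⁻¹ :=
  Matrix.inv_eq_right_inv (by
    rw [Matrix.neg_mul, Matrix.mul_neg, neg_neg, Matrix.mul_nonsing_inv _ h])

/-- with `L(U) = ∫₀^∞ e^{tA} U e^{tAᵀ} dt` (A Hurwitz), `Θ`, `𝝸`
antisymmetric (`Θ` invertible), `Π` symmetric positive semidefinite, and sequences
defined by `β₀ = I`, `α₁ = γ₀ = Θ`, `β₁ = Θ⁻¹ 𝝸 Θ⁻¹`,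
`γ_k = L(α_k Π^{δ_{k1}} γ_{k-1})`, `α_{k+1} = γ_k β_k`,
`β_{k+1} = γ_k⁻¹ α_k Π^{δ_{k1}} γ_{k-1} γ_k⁻¹` (each `γ_k` invertible), one has
`β_kᵀ = (-1)^k β_k` and `γ_kᵀ = -(-1)^k γ_k` for all `k ≥ 0`. -/
theorem stmt19 (n : ℕ) (A Θ Mho Pi : Matrix (Fin n) (Fin n) ℝ)
    (hA : ∀ μ ∈ spectrum ℂ (A.map (algebraMap ℝ ℂ)), μ.re < 0)
    (hΘ : Θᵀ = -Θ) (hΘinv : IsUnit Θ.det)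
    (hMho : Mhoᵀ = -Mho) (hPi : Piᵀ = Pi) (hPiPSD : Pi.PosSemidef)
    (L : Matrix (Fin n) (Fin n) ℝ → Matrix (Fin n) (Fin n) ℝ)
    (hL : ∀ U, L U = ∫ t in Set.Ioi (0 : ℝ),
      NormedSpace.exp (t • A) * U * NormedSpace.exp (t • Aᵀ))
    (α β γ : ℕ → Matrix (Fin n) (Fin n) ℝ)
    (hβ0 : β 0 = 1) (hα1 : α 1 = Θ) (hγ0 : γ 0 = Θ) (hβ1 : β 1 = Θ⁻¹ * Mho * Θ⁻¹)
    (hγ : ∀ k, 1 ≤ k →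
      γ k = L (α k * (if k = 1 then Pi else 1) * γ (k - 1)))
    (hα : ∀ k, 1 ≤ k → α (k + 1) = γ k * β k)
    (hβ : ∀ k, 1 ≤ k →
      β (k + 1) = (γ k)⁻¹ * α k * (if k = 1 then Pi else 1) * γ (k - 1) * (γ k)⁻¹)
    (hγinv : ∀ k, 1 ≤ k → IsUnit (γ k).det) :
    ∀ k : ℕ, (β k)ᵀ = ((-1 : ℝ) ^ k) • β k ∧ (γ k)ᵀ = -(((-1 : ℝ) ^ k) • γ k) := by
  have hLT : ∀ U : Matrix (Fin n) (Fin n) ℝ, (L U)ᵀ = L Uᵀ := by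
    intro U
    rw [hL, hL, integral_transpose]
    congr 1
    funext t
    simp [Matrix.transpose_mul, ← Matrix.exp_transpose, Matrix.transpose_smul,
      Matrix.mul_assoc]
  have hLneg : ∀ U : Matrix (Fin n) (Fin n) ℝ, L (-U) = -L U := by
    intro U
    rw [hL, hL, ← integral_neg]
    congr 1
    funext t
    simp [Matrix.mul_neg, Matrix.neg_mul]
  have key : ∀ k : ℕ,
      (β (k+1))ᵀ = ((-1 : ℝ) ^ (k+1)) • β (k+1) ∧
      (γ (k+1))ᵀ = -(((-1 : ℝ) ^ (k+1)) • γ (k+1)) ∧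
      (α (k+1) * (if k+1 = 1 then Pi else 1) * γ k)ᵀ
        = -(((-1 : ℝ) ^ (k+1)) • (α (k+1) * (if k+1 = 1 then Pi else 1) * γ k)) := by
    intro k
    induction k with
    | zero =>
      have hM1 : (α 1 * (if 1 = 1 then Pi else 1) * γ 0)ᵀ
          = α 1 * (if 1 = 1 then Pi else 1) * γ 0 := by
        simp only [if_pos rfl, hα1, hγ0, Matrix.transpose_mul, hΘ, hPi]
        simp [Matrix.mul_assoc, hPi]
      have hγ1 : (γ 1)ᵀ = γ 1 := by
        rw [hγ 1 le_rfl, hLT, hM1]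
      refine ⟨?_, ?_, ?_⟩
      · rw [hβ1]
        simp only [Matrix.transpose_mul, Matrix.transpose_nonsing_inv, hΘ, hMho,
          matrix_inv_neg Θ hΘinv]
        simp [Matrix.mul_assoc]
      · simpa using hγ1
      · simpa using hM1
    | succ k ih =>
      obtain ⟨ihβ, ihγ, ihM⟩ := ih
      have hu : IsUnit (γ (k+1)).det := hγinv (k+1) (by omega)
      set M : Matrix (Fin n) (Fin n) ℝ :=
        α (k+1) * ((if k+1 = 1 then Pi else 1) * γ k) with hMdef
      have hb2 : β (k+2) = (γ (k+1))⁻¹ * (M * (γ (k+1))⁻¹) := by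
        rw [hβ (k+1) (by omega)]
        simp only [Nat.add_sub_cancel, hMdef, Matrix.mul_assoc]
      have hM2 : α (k+2) * (if k+2 = 1 then Pi else 1) * γ (k+1)
          = γ (k+1) * β (k+1) * γ (k+1) := by
        rw [if_neg (by omega), hα (k+1) (by omega), Matrix.mul_one]
      have hγ2 : γ (k+2) = L (α (k+2) * (if k+2 = 1 then Pi else 1) * γ (k+1)) := by
        rw [hγ (k+2) (by omega)]
        norm_num
      rcases Nat.even_or_odd (k+1) with hpar | hpar
      · -- (-1)^(k+1) = 1, (-1)^(k+2) = -1
        have e1 : ((-1 : ℝ)) ^ (k+1) = 1 := hpar.neg_one_pow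
        have e2 : ((-1 : ℝ)) ^ (k+2) = -1 := by
          rw [pow_succ, e1, one_mul]
        rw [e1, one_smul] at ihβ ihγ
        have ihM' : Mᵀ = -M := by
          rw [hMdef, ← Matrix.mul_assoc, ihM, e1, one_smul]
        have hM2T : (α (k+2) * (if k+2 = 1 then Pi else 1) * γ (k+1))ᵀ
            = α (k+2) * (if k+2 = 1 then Pi else 1) * γ (k+1) := by
          rw [hM2, Matrix.transpose_mul, Matrix.transpose_mul, ihγ, ihβ]
          simp [Matrix.neg_mul, Matrix.mul_neg, Matrix.mul_assoc]
        refine ⟨?_, ?_, ?_⟩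
        · rw [e2, neg_one_smul, hb2, Matrix.transpose_mul, Matrix.transpose_mul,
            Matrix.transpose_nonsing_inv, ihγ, matrix_inv_neg _ hu, ihM']
          simp [Matrix.neg_mul, Matrix.mul_neg, Matrix.mul_assoc]
        · rw [e2, neg_one_smul, neg_neg, hγ2, hLT, hM2T]
        · rw [e2, neg_one_smul, neg_neg, hM2T]
      · -- (-1)^(k+1) = -1, (-1)^(k+2) = 1
        have e1 : ((-1 : ℝ)) ^ (k+1) = -1 := hpar.neg_one_pow
        have e2 : ((-1 : ℝ)) ^ (k+2) = 1 := by
          rw [pow_succ, e1]; norm_num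
        rw [e1, neg_one_smul] at ihβ
        rw [e1, neg_one_smul, neg_neg] at ihγ
        have ihM' : Mᵀ = M := by
          rw [hMdef, ← Matrix.mul_assoc, ihM, e1, neg_one_smul, neg_neg]
        have hM2T : (α (k+2) * (if k+2 = 1 then Pi else 1) * γ (k+1))ᵀ
            = -(α (k+2) * (if k+2 = 1 then Pi else 1) * γ (k+1)) := by
          rw [hM2, Matrix.transpose_mul, Matrix.transpose_mul, ihγ, ihβ]
          simp [Matrix.neg_mul, Matrix.mul_neg, Matrix.mul_assoc]
        refine ⟨?_, ?_, ?_⟩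
        · rw [e2, one_smul, hb2, Matrix.transpose_mul, Matrix.transpose_mul,
            Matrix.transpose_nonsing_inv, ihγ, ihM']
          simp [Matrix.neg_mul, Matrix.mul_neg, Matrix.mul_assoc]
        · rw [e2, one_smul, hγ2, hLT, hM2T, hLneg]
        · rw [e2, one_smul, hM2T]
  intro k
  match k with
  | 0 => constructor <;> simp [hβ0, hγ0, hΘ]
  | (k+1) => exact ⟨(key k).1, (key k).2.1⟩
end
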